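/- Let p, p̃ : [0,1] → ℝ be continuous and strictly positive, let α, β ∈ ℝ, and let λ, λ̃ ∈ ℝ with λ̃ ≠ 0. Let u, ũ : [0,1] → ℝ be twice continuously differentiable, satisfy BC(α,β), be strictly positive on the open interval (0,1), and solve −u''(x) = λ·p(x)·u(x) and −ũ''(x) = λ̃·p̃(x)·ũ(x) on [0,1]. If λ = λ̃ · max_{x ∈ [0,1]} ( p̃(x)/p(x) ), then λ ≠ 0 and p(x) = (λ̃/λ)·p̃(x) for all x ∈ [0,1]. -/

import Mathlib

open Real

/-- Separated boundary conditions BC(α,β) on [0,1]. -/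
def BC (α β : ℝ) (w : ℝ → ℝ) : Prop :=
  w 0 * Real.cos α + deriv w 0 * Real.sin α = 0 ∧
  w 1 * Real.cos β + deriv w 1 * Real.sin β = 0

/-- The 'max' half of Theorem 2.1: first-eigenvalue Ambarzumyan-type theorem. -/
theorem stmt_1 (p pt : ℝ → ℝ) (hp : Continuous p) (hpt : Continuous pt)
    (hppos : ∀ x ∈ Set.Icc (0:ℝ) 1, 0 < p x)
    (hptpos : ∀ x ∈ Set.Icc (0:ℝ) 1, 0 < pt x)
    (α β : ℝ) (l lt : ℝ) (hlt : lt ≠ 0) (u ut : ℝ → ℝ)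
    (hu : ContDiff ℝ 2 u) (hut : ContDiff ℝ 2 ut)
    (hbc : BC α β u) (htbc : BC α β ut)
    (hupos : ∀ x ∈ Set.Ioo (0:ℝ) 1, 0 < u x)
    (hutpos : ∀ x ∈ Set.Ioo (0:ℝ) 1, 0 < ut x)
    (hode : ∀ x ∈ Set.Icc (0:ℝ) 1, -(deriv (deriv u) x) = l * p x * u x)
    (htode : ∀ x ∈ Set.Icc (0:ℝ) 1, -(deriv (deriv ut) x) = lt * pt x * ut x)
    (M : ℝ) (hM : IsGreatest ((fun x => pt x / p x) '' Set.Icc (0:ℝ) 1) M)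
    (hl : l = lt * M) :
    l ≠ 0 ∧ ∀ x ∈ Set.Icc (0:ℝ) 1, p x = (lt / l) * pt x := by
  obtain ⟨⟨x₀, hx₀, hMx₀⟩, hMub⟩ := hM
  have hMpos : 0 < M := by
    rw [← hMx₀]; exact div_pos (hptpos x₀ hx₀) (hppos x₀ hx₀)
  have hlne : l ≠ 0 := by rw [hl]; exact mul_ne_zero hlt hMpos.ne'
  refine ⟨hlne, ?_⟩
  -- nonnegativity of M * p - pt on [0,1]
  have hnn : ∀ x ∈ Set.Icc (0:ℝ) 1, 0 ≤ M * p x - pt x := by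
    intro x hx
    have h1 : pt x / p x ≤ M := hMub ⟨x, hx, rfl⟩
    have h2 := hppos x hx
    have := (div_le_iff₀ h2).mp h1
    linarith
  -- differentiability facts
  have hud : Differentiable ℝ u := hu.differentiable (by norm_num)
  have hutd : Differentiable ℝ ut := hut.differentiable (by norm_num)
  have hud' : Differentiable ℝ (deriv u) := by
    have h2 : ContDiff ℝ (1+1) u := by norm_num; exact hu
    exact ((contDiff_succ_iff_deriv.mp h2).2.2).differentiable one_ne_zero
  have hutd' : Differentiable ℝ (deriv ut) := by
    have h2 : ContDiff ℝ (1+1) ut := by norm_num; exact hut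
    exact ((contDiff_succ_iff_deriv.mp h2).2.2).differentiable one_ne_zero
  -- Wronskian
  set W : ℝ → ℝ := fun x => u x * deriv ut x - deriv u x * ut x with hW
  have hWd : ∀ x, HasDerivAt W (u x * deriv (deriv ut) x - deriv (deriv u) x * ut x) x := by
    intro x
    have h1 : HasDerivAt u (deriv u x) x := (hud x).hasDerivAt
    have h2 : HasDerivAt ut (deriv ut x) x := (hutd x).hasDerivAt
    have h1' : HasDerivAt (deriv u) (deriv (deriv u) x) x := (hud' x).hasDerivAt
    have h2' : HasDerivAt (deriv ut) (deriv (deriv ut) x) x := (hutd' x).hasDerivAt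
    have := (h1.mul h2').sub (h1'.mul h2)
    exact this.congr_deriv (by ring)
  set g : ℝ → ℝ := fun x => lt * W x with hg
  have hgd : ∀ x, HasDerivAt g (lt * (u x * deriv (deriv ut) x - deriv (deriv u) x * ut x)) x :=
    fun x => (hWd x).const_mul lt
  have hgd' : ∀ x ∈ Set.Icc (0:ℝ) 1,
      deriv g x = lt^2 * ((M * p x - pt x) * (u x * ut x)) := by
    intro x hx
    rw [(hgd x).deriv]
    have e1 := hode x hx
    have e2 := htode x hx
    have h1 : deriv (deriv u) x = -(l * p x * u x) := by linarith
    have h2 : deriv (deriv ut) x = -(lt * pt x * ut x) := by linarith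
    rw [h1, h2, hl]; ring
  -- g vanishes at the endpoints
  have hg0 : g 0 = 0 := by
    have e1 := hbc.1
    have e2 := htbc.1
    have pyth := sin_sq_add_cos_sq α
    simp only [hg, hW]
    linear_combination lt * (Real.cos α * deriv ut 0 - Real.sin α * ut 0) * e1 +
      lt * (Real.sin α * u 0 - Real.cos α * deriv u 0) * e2 -
      lt * (u 0 * deriv ut 0 - deriv u 0 * ut 0) * pyth
  have hg1 : g 1 = 0 := by
    have e1 := hbc.2
    have e2 := htbc.2
    have pyth := sin_sq_add_cos_sq β
    simp only [hg, hW]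
    linear_combination lt * (Real.cos β * deriv ut 1 - Real.sin β * ut 1) * e1 +
      lt * (Real.sin β * u 1 - Real.cos β * deriv u 1) * e2 -
      lt * (u 1 * deriv ut 1 - deriv u 1 * ut 1) * pyth
  -- g is monotone on [0,1]
  have hgcont : ContinuousOn g (Set.Icc 0 1) :=
    (continuous_const.mul ((hud.continuous.mul hutd'.continuous).sub
      (hud'.continuous.mul hutd.continuous))).continuousOn
  have hmono : MonotoneOn g (Set.Icc (0:ℝ) 1) := by
    apply monotoneOn_of_deriv_nonneg (convex_Icc 0 1) hgcont
    · intro x hx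
      exact ((hgd x).differentiableAt).differentiableWithinAt
    · intro x hx
      rw [interior_Icc] at hx
      rw [hgd' x (Set.Ioo_subset_Icc_self hx)]
      have := hnn x (Set.Ioo_subset_Icc_self hx)
      have hu1 := hupos x hx
      have hu2 := hutpos x hx
      positivity
  -- hence g ≡ 0 on [0,1]
  have hgzero : ∀ x ∈ Set.Icc (0:ℝ) 1, g x = 0 := by
    intro x hx
    have h1 : g 0 ≤ g x := hmono (Set.left_mem_Icc.mpr (by norm_num)) hx hx.1
    have h2 : g x ≤ g 1 := hmono hx (Set.right_mem_Icc.mpr (by norm_num)) hx.2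
    rw [hg0] at h1; rw [hg1] at h2; linarith
  -- hence M * p = pt on (0,1)
  have keyIoo : ∀ x ∈ Set.Ioo (0:ℝ) 1, M * p x - pt x = 0 := by
    intro x hx
    have hmem : Set.Ioo (0:ℝ) 1 ∈ nhds x := isOpen_Ioo.mem_nhds hx
    have heq : g =ᶠ[nhds x] fun _ => 0 :=
      Filter.eventuallyEq_of_mem hmem (fun y hy => hgzero y (Set.Ioo_subset_Icc_self hy))
    have hder0 : deriv g x = 0 := by rw [heq.deriv_eq]; simp
    rw [hgd' x (Set.Ioo_subset_Icc_self hx)] at hder0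
    have hposf : 0 < lt^2 * (u x * ut x) :=
      mul_pos (pow_two_pos_of_ne_zero hlt) (mul_pos (hupos x hx) (hutpos x hx))
    have : (M * p x - pt x) * (lt^2 * (u x * ut x)) = 0 := by linarith [hder0]
    rcases mul_eq_zero.mp this with h | h
    · exact h
    · exact absurd h hposf.ne'
  -- extend to [0,1] by continuity
  have hclosed : IsClosed {x : ℝ | M * p x - pt x = 0} :=
    isClosed_eq ((continuous_const.mul hp).sub hpt) continuous_const
  have key : ∀ x ∈ Set.Icc (0:ℝ) 1, M * p x - pt x = 0 := by
    intro x hx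
    have hsub : Set.Icc (0:ℝ) 1 ⊆ {x : ℝ | M * p x - pt x = 0} := by
      rw [← closure_Ioo (by norm_num : (0:ℝ) ≠ 1)]
      exact closure_minimal (fun y hy => keyIoo y hy) hclosed
    exact hsub hx
  intro x hx
  have hkx := key x hx
  rw [hl]
  field_simp
  linear_combination hkx
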